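/- arXiv:2307.08998 — 2 statements merged into one kernel-verified Lean document; each statement's English description precedes it below -/
import Mathlib

section
/- Let u ≥ 2 and 2 ≤ i ≤ k. The set {y·P_{2i+2}(u) + z·P_{2i+2k+1}(u) : 0 ≤ y < P_{2i}(u)/u, 0 ≤ z < u} forms a complete residue system modulo P_{2i}(u). -/
def pell (u : ℕ) : ℕ → ℕ
  | 0 => 0
  | 1 => 1
  | n + 2 => u * pell u (n + 1) + pell u n

lemma pell_pos (u : ℕ) (hu : 2 ≤ u) : ∀ n, 0 < pell u (n + 1) := by
  intro n
  induction n with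
  | zero => simp [pell]
  | succ n ih =>
    show 0 < u * pell u (n + 1) + pell u n
    have : 0 < u * pell u (n + 1) := Nat.mul_pos (by omega) ih
    omega

lemma pell_ge_u (u : ℕ) (hu : 2 ≤ u) : ∀ n, u ≤ pell u (n + 2) := by
  intro n
  induction n with
  | zero => simp [pell]
  | succ n ih =>
    show u ≤ u * pell u (n + 2) + pell u (n + 1)
    have h1 : 0 < pell u (n + 2) := pell_pos u hu (n + 1)
    have : u * 1 ≤ u * pell u (n + 2) := Nat.mul_le_mul_left u h1
    omega

lemma u_dvd_pell_even (u : ℕ) : ∀ n, u ∣ pell u (2 * n) := by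
  intro n
  induction n with
  | zero => simp [pell]
  | succ n ih =>
    have : 2 * (n + 1) = (2 * n) + 2 := by ring
    rw [this]
    show u ∣ u * pell u (2 * n + 1) + pell u (2 * n)
    exact Nat.dvd_add (Dvd.intro _ rfl) ih

lemma pell_odd_mod (u : ℕ) : ∀ n, pell u (2 * n + 1) ≡ 1 [MOD u] := by
  intro n
  induction n with
  | zero => simp [pell, Nat.ModEq.refl]
  | succ n ih =>
    have h : 2 * (n + 1) + 1 = (2 * n + 1) + 2 := by ring
    rw [h]
    show u * pell u (2 * n + 2) + pell u (2 * n + 1) ≡ 1 [MOD u]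
    calc u * pell u (2 * n + 2) + pell u (2 * n + 1)
        ≡ 0 + pell u (2 * n + 1) [MOD u] :=
          Nat.ModEq.add_right _ ((Nat.modEq_zero_iff_dvd).2 (Dvd.intro _ rfl))
      _ = pell u (2 * n + 1) := by ring
      _ ≡ 1 [MOD u] := ih

lemma pell_coprime (u : ℕ) : ∀ n, Nat.Coprime (pell u (n + 1)) (pell u n) := by
  intro n
  induction n with
  | zero => simp [pell, Nat.Coprime]
  | succ n ih =>
    show Nat.Coprime (u * pell u (n + 1) + pell u n) (pell u (n + 1))
    rw [Nat.add_comm]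
    exact (Nat.coprime_add_mul_right_left _ _ u).2 ih.symm

theorem stmt_11 (u : ℕ) (hu : 2 ≤ u) (i k : ℕ) (hi : 2 ≤ i) (hik : i ≤ k) :
    ∀ m : ℕ, m < pell u (2 * i) →
      ∃! yz : ℕ × ℕ, yz.1 < pell u (2 * i) / u ∧ yz.2 < u ∧
        (yz.1 * pell u (2 * i + 2) + yz.2 * pell u (2 * i + 2 * k + 1)) % pell u (2 * i) = m := by
  intro m hm
  set N := pell u (2 * i) with hN
  set A := pell u (2 * i + 2) with hA
  set B := pell u (2 * i + 2 * k + 1) with hB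
  set P := pell u (2 * i + 1) with hP
  have hu0 : 0 < u := by omega
  have hNpos : 0 < N := by
    have : 2 * i = (2 * i - 1) + 1 := by omega
    rw [hN, this]; exact pell_pos u hu _
  have huN : u ∣ N := u_dvd_pell_even u i
  have hNu : u ≤ N := by
    have : 2 * i = (2 * i - 2) + 2 := by omega
    rw [hN, this]; exact pell_ge_u u hu _
  have hAeq : A = u * P + N := by
    rw [hA, hP, hN]
    show pell u (2 * i + 2) = _
    rfl
  have hAmod : A ≡ u * P [MOD N] := by
    rw [hAeq]
    show (u * P + N) % N = (u * P) % N
    simp [Nat.add_mod_right]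
  have hAu : u ∣ A := by
    have : 2 * i + 2 = 2 * (i + 1) := by ring
    rw [hA, this]; exact u_dvd_pell_even u (i + 1)
  have hBu : B ≡ 1 [MOD u] := by
    have : 2 * i + 2 * k + 1 = 2 * (i + k) + 1 := by ring
    rw [hB, this]; exact pell_odd_mod u (i + k)
  have hcop : Nat.Coprime P N := pell_coprime u (2 * i)
  -- injectivity
  have hinj : ∀ y z y' z' : ℕ, y < N / u → z < u → y' < N / u → z' < u →
      (y * A + z * B) % N = (y' * A + z' * B) % N → y = y' ∧ z = z' := by
    intro y z y' z' hy hz hy' hz' heq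
    have h : y * A + z * B ≡ y' * A + z' * B [MOD N] := heq
    -- mod u: get z = z'
    have hmodu : y * A + z * B ≡ y' * A + z' * B [MOD u] := h.of_dvd huN
    have key : ∀ a b : ℕ, a * A + b * B ≡ b [MOD u] := by
      intro a b
      calc a * A + b * B ≡ 0 + b * 1 [MOD u] :=
            Nat.ModEq.add ((Nat.modEq_zero_iff_dvd).2 (Dvd.dvd.mul_left hAu a))
              (hBu.mul_left b)
        _ = b := by ring
    have hzz : z ≡ z' [MOD u] := ((key y z).symm.trans hmodu).trans (key y' z')
    have hz_eq : z = z' := by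
      have := hzz
      unfold Nat.ModEq at this
      rwa [Nat.mod_eq_of_lt hz, Nat.mod_eq_of_lt hz'] at this
    subst hz_eq
    refine ⟨?_, rfl⟩
    have h2 : y * A ≡ y' * A [MOD N] := Nat.ModEq.add_right_cancel' _ h
    have h3 : y * (u * P) ≡ y' * (u * P) [MOD N] :=
      ((hAmod.mul_left y).symm.trans h2).trans (hAmod.mul_left y')
    have h4 : (y * u) * P ≡ (y' * u) * P [MOD N] := by
      rw [mul_assoc, mul_assoc]; exact h3
    have h5 : y * u ≡ y' * u [MOD N] :=
      Nat.ModEq.cancel_right_of_coprime hcop.symm h4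
    have hNdec : N = (N / u) * u := (Nat.div_mul_cancel huN).symm
    rw [hNdec] at h5
    have h6 : y ≡ y' [MOD N / u] := Nat.ModEq.mul_right_cancel' (by omega) h5
    unfold Nat.ModEq at h6
    rwa [Nat.mod_eq_of_lt hy, Nat.mod_eq_of_lt hy'] at h6
  -- surjectivity by counting
  set f : ℕ × ℕ → ℕ := fun p => (p.1 * A + p.2 * B) % N with hf
  set S : Finset (ℕ × ℕ) := Finset.range (N / u) ×ˢ Finset.range u with hS
  have hSmem : ∀ p : ℕ × ℕ, p ∈ S ↔ p.1 < N / u ∧ p.2 < u := by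
    intro p; simp [hS, Finset.mem_product]
  have hinjOn : Set.InjOn f S := by
    intro p hp q hq hpq
    rw [Finset.mem_coe, hSmem] at hp hq
    obtain ⟨h1, h2⟩ := hinj p.1 p.2 q.1 q.2 hp.1 hp.2 hq.1 hq.2 hpq
    exact Prod.ext h1 h2
  have hsub : S.image f ⊆ Finset.range N := by
    intro x hx
    simp only [Finset.mem_image] at hx
    obtain ⟨p, _, rfl⟩ := hx
    exact Finset.mem_range.2 (Nat.mod_lt _ hNpos)
  have hcard : (S.image f).card = N := by
    rw [Finset.card_image_of_injOn hinjOn]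
    simp [hS, Finset.card_product]
    exact Nat.div_mul_cancel huN
  have himg : S.image f = Finset.range N := by
    apply Finset.eq_of_subset_of_card_le hsub
    rw [hcard, Finset.card_range]
  have hmmem : m ∈ S.image f := by rw [himg]; exact Finset.mem_range.2 hm
  simp only [Finset.mem_image] at hmmem
  obtain ⟨p, hpS, hpf⟩ := hmmem
  rw [hSmem] at hpS
  refine ⟨p, ⟨hpS.1, hpS.2, hpf⟩, ?_⟩
  intro q ⟨hq1, hq2, hq3⟩
  obtain ⟨e1, e2⟩ := hinj q.1 q.2 p.1 p.2 hq1 hq2 hpS.1 hpS.2 (hq3.trans hpf.symm)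
  exact Prod.ext e1 e2
end

section
/- Let u ≥ 2 and 2 ≤ i ≤ k. The 0-Frobenius number satisfies g(P_{2i}(u), P_{2i+2}(u), P_{2i+2k+1}(u)) = (P_{2i}(u)/u − 1)·P_{2i+2}(u) + (u−1)·P_{2i+2k+1}(u) − P_{2i}(u). -/
lemma pell_add_two (u n : ℕ) : pell u (n+2) = u * pell u (n+1) + pell u n := rfl

lemma pell_mono {u : ℕ} (hu : 1 ≤ u) : Monotone (pell u) := by
  apply monotone_nat_of_le_succ
  intro n
  match n with
  | 0 => simp [pell]
  | 1 => simpa [pell] using hu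
  | n+2 =>
    rw [pell_add_two (n := n+1)]
    calc pell u (n+2) = 1 * pell u (n+2) := (one_mul _).symm
    _ ≤ u * pell u (n+2) + pell u (n+1) :=
      le_add_right (Nat.mul_le_mul_right _ hu)

lemma pell_pos_s12 {u : ℕ} (hu : 1 ≤ u) {n : ℕ} (hn : 1 ≤ n) : 1 ≤ pell u n := by
  have := pell_mono hu hn
  simpa [pell] using this

lemma pell_even_dvd (u : ℕ) : ∀ n, u ∣ pell u (2*n) := by
  intro n
  induction n with
  | zero => simp [pell]
  | succ n ih =>
    have h : 2*(n+1) = 2*n + 2 := by ring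
    rw [h, pell_add_two]
    exact dvd_add (dvd_mul_right _ _) ih

lemma pell_odd_modeq (u : ℕ) : ∀ n, pell u (2*n+1) ≡ 1 [MOD u] := by
  intro n
  induction n with
  | zero => rfl
  | succ n ih =>
    have h : 2*(n+1)+1 = (2*n+1) + 2 := by ring
    rw [h, pell_add_two]
    calc u * pell u (2*n+1+1) + pell u (2*n+1) ≡ pell u (2*n+1) [MOD u] := by
          unfold Nat.ModEq; simp [Nat.mul_add_mod]
    _ ≡ 1 [MOD u] := ih

lemma pell_coprime_succ (u : ℕ) : ∀ n, Nat.Coprime (pell u n) (pell u (n+1)) := by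
  intro n
  induction n with
  | zero => simp [pell, Nat.coprime_one_right]
  | succ n ih =>
    rw [pell_add_two]
    have h : u * pell u (n+1) + pell u n = pell u n + pell u (n+1) * u := by ring
    rw [h]
    exact (Nat.coprime_add_mul_left_right _ _ _).mpr ih.symm

lemma pell_mul_le {u : ℕ} (hu : 1 ≤ u) : ∀ n m, pell u m * pell u (n+1) ≤ pell u (m+n) := by
  intro n
  induction n using Nat.strong_induction_on with
  | _ n ih =>
    match n with
    | 0 => intro m; simp [pell]
    | 1 =>
      intro m
      match m with
      | 0 => simp [pell]
      | m+1 =>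
        rw [pell_add_two (n := m)]
        have : pell u 2 = u := by simp [pell]
        rw [this]
        calc pell u (m+1) * u = u * pell u (m+1) := by ring
        _ ≤ u * pell u (m+1) + pell u m := Nat.le_add_right _ _
    | n+2 =>
      intro m
      have h1 := ih (n+1) (by omega) m
      have h2 := ih n (by omega) m
      have e : m + (n+2) = (m + n) + 2 := by ring
      rw [pell_add_two (n := n+1), e, pell_add_two]
      calc pell u m * (u * pell u (n + 1 + 1) + pell u (n + 1))
          = u * (pell u m * pell u (n+2)) + pell u m * pell u (n+1) := by ring_nf
      _ ≤ u * pell u (m+n+1) + pell u (m+n) :=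
          Nat.add_le_add (Nat.mul_le_mul_left _ h1) h2
theorem stmt_12 (u : ℕ) (hu : 2 ≤ u) (i k : ℕ) (hi : 2 ≤ i) (hik : i ≤ k) :
    ∃ g : ℕ, IsGreatest {m : ℕ | ¬ ∃ x y z : ℕ,
        x * pell u (2 * i) + y * pell u (2 * i + 2) + z * pell u (2 * i + 2 * k + 1) = m} g ∧
      (g : ℤ) = ((pell u (2 * i) / u : ℕ) - 1 : ℤ) * pell u (2 * i + 2)
        + (u - 1 : ℤ) * pell u (2 * i + 2 * k + 1) - pell u (2 * i) := by
  have hu1 : 1 ≤ u := by omega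
  have hu0 : 0 < u := by omega
  set a := pell u (2 * i) with ha
  set b := pell u (2 * i + 2) with hb
  set c := pell u (2 * i + 2 * k + 1) with hc
  obtain ⟨q, haq⟩ : u ∣ a := pell_even_dvd u i
  obtain ⟨q', hbq⟩ : u ∣ b := by
    have h := pell_even_dvd u (i+1)
    have e : 2*(i+1) = 2*i+2 := by ring
    rwa [e] at h
  have hcu : c ≡ 1 [MOD u] := by
    have h := pell_odd_modeq u (i+k)
    have e : 2*(i+k)+1 = 2*i+2*k+1 := by ring
    rwa [e] at h
  have hbu : b ≡ 0 [MOD u] := (Nat.modEq_zero_iff_dvd).mpr ⟨q', hbq⟩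
  have hau : a ≡ 0 [MOD u] := (Nat.modEq_zero_iff_dvd).mpr ⟨q, haq⟩
  have ha_pos : 0 < a := pell_pos_s12 hu1 (by omega)
  have hb_pos : 0 < b := pell_pos_s12 hu1 (by omega)
  have hc_pos : 0 < c := pell_pos_s12 hu1 (by omega)
  have hq_pos : 0 < q := by
    rcases Nat.eq_zero_or_pos q with h | h
    · rw [h, mul_zero] at haq; omega
    · exact h
  -- coprimality of q and q'
  have hcop : Nat.Coprime q q' := by
    have hP : Nat.Coprime a (pell u (2*i+1)) := pell_coprime_succ u (2*i)
    have hqP : Nat.Coprime q (pell u (2*i+1)) :=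
      Nat.Coprime.coprime_dvd_left ⟨u, by rw [haq, mul_comm]⟩ hP
    have hq' : q' = pell u (2*i+1) + q := by
      have hb2 : b = u * pell u (2*i+1) + a := pell_add_two u (2*i)
      have : u * q' = u * (pell u (2*i+1) + q) := by
        rw [← hbq, hb2, haq]; ring
      exact Nat.eq_of_mul_eq_mul_left hu0 this
    rw [hq']
    exact Nat.coprime_add_self_right.mpr hqP
  -- size bound: (q-1)*b < c
  have hqa : q ≤ a := by
    calc q = 1 * q := (one_mul q).symm
    _ ≤ u * q := Nat.mul_le_mul_right _ hu1
    _ = a := haq.symm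
  have hab_c : a * b ≤ c := by
    have h1 : a * b ≤ pell u (2*i + (2*i+1)) := pell_mul_le hu1 (2*i+1) (2*i)
    have h2 : pell u (2*i + (2*i+1)) ≤ c := by
      apply pell_mono hu1; omega
    exact le_trans h1 h2
  have hcb : (q-1)*b < c := by
    have h1 : (q-1)*b = q*b - b := by rw [Nat.sub_mul, one_mul]
    have h2 : q * b ≤ a * b := Nat.mul_le_mul_right _ hqa
    have h3 : b ≤ q * b := Nat.le_mul_of_pos_left b hq_pos
    omega
  have hca : a ≤ c := by
    apply pell_mono hu1; omega
  -- the Frobenius candidate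
  have hWa : a ≤ (q-1)*b + (u-1)*c := by
    have h1 : c ≤ (u-1)*c := by
      calc c = 1*c := (one_mul c).symm
      _ ≤ (u-1)*c := Nat.mul_le_mul_right _ (by omega)
    omega
  -- key1 : injectivity
  have key1 : ∀ y1 z1 y2 z2 : ℕ, y1 < q → z1 < u → y2 < q → z2 < u →
      y1*b + z1*c ≡ y2*b + z2*c [MOD a] → y1 = y2 ∧ z1 = z2 := by
    intro y1 z1 y2 z2 hy1 hz1 hy2 hz2 h
    have hua : u ∣ a := ⟨q, haq⟩
    have hmu : y1*b + z1*c ≡ y2*b + z2*c [MOD u] := h.of_dvd hua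
    have e1 : y1*b + z1*c ≡ z1 [MOD u] := by
      calc y1*b + z1*c ≡ y1*0 + z1*1 [MOD u] :=
        Nat.ModEq.add (hbu.mul_left y1) (hcu.mul_left z1)
      _ = z1 := by ring
    have e2 : y2*b + z2*c ≡ z2 [MOD u] := by
      calc y2*b + z2*c ≡ y2*0 + z2*1 [MOD u] :=
        Nat.ModEq.add (hbu.mul_left y2) (hcu.mul_left z2)
      _ = z2 := by ring
    have hz12 : z1 ≡ z2 [MOD u] := (e1.symm.trans hmu).trans e2
    have hzeq : z1 = z2 := by
      have := hz12
      unfold Nat.ModEq at this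
      rwa [Nat.mod_eq_of_lt hz1, Nat.mod_eq_of_lt hz2] at this
    subst hzeq
    have hyb : y1*b ≡ y2*b [MOD a] := Nat.ModEq.add_right_cancel (Nat.ModEq.refl _) h
    have key : ∀ w1 w2 : ℕ, w1 ≤ w2 → w2 < q → w1*b ≡ w2*b [MOD a] → w1 = w2 := by
      intro w1 w2 hle hw2 hmod
      have hdvd : a ∣ w2*b - w1*b :=
        (Nat.modEq_iff_dvd' (Nat.mul_le_mul_right _ hle)).mp hmod
      have hsub : w2*b - w1*b = (w2-w1)*b := by
        rw [Nat.sub_mul]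
      rw [hsub, hbq, haq] at hdvd
      have hdvd2 : q ∣ (w2-w1)*q' := by
        have h3 : (w2-w1)*(u*q') = u*((w2-w1)*q') := by ring
        rw [h3] at hdvd
        exact (Nat.mul_dvd_mul_iff_left hu0).mp hdvd
      have hdd := hcop.dvd_of_dvd_mul_right hdvd2
      have h0 : w2 - w1 = 0 := Nat.eq_zero_of_dvd_of_lt hdd (by omega)
      omega
    rcases le_total y1 y2 with hle | hle
    · exact ⟨key y1 y2 hle hy2 hyb, rfl⟩
    · exact ⟨(key y2 y1 hle hy1 hyb.symm).symm, rfl⟩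
  -- key2 : surjectivity mod a
  have key2 : ∀ m : ℕ, ∃ y z : ℕ, y < q ∧ z < u ∧ m ≡ y*b + z*c [MOD a] := by
    intro m
    haveI : NeZero a := ⟨ha_pos.ne'⟩
    haveI : NeZero q := ⟨hq_pos.ne'⟩
    haveI : NeZero u := ⟨hu0.ne'⟩
    let f : Fin q × Fin u → ZMod a := fun p => (((p.1 : ℕ)*b + (p.2 : ℕ)*c : ℕ) : ZMod a)
    have hinj : Function.Injective f := by
      intro p1 p2 hf
      have hmod : ((p1.1:ℕ)*b + (p1.2:ℕ)*c) ≡ ((p2.1:ℕ)*b + (p2.2:ℕ)*c) [MOD a] :=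
        (ZMod.natCast_eq_natCast_iff _ _ _).mp hf
      obtain ⟨h1, h2⟩ := key1 _ _ _ _ p1.1.isLt p1.2.isLt p2.1.isLt p2.2.isLt hmod
      ext
      · exact h1
      · exact h2
    have hcard : Fintype.card (Fin q × Fin u) = Fintype.card (ZMod a) := by
      simp [ZMod.card, haq, Nat.mul_comm]
    have hbij : Function.Bijective f :=
      (Fintype.bijective_iff_injective_and_card f).mpr ⟨hinj, hcard⟩
    obtain ⟨p, hp⟩ := hbij.2 (m : ZMod a)
    refine ⟨p.1, p.2, p.1.isLt, p.2.isLt, ?_⟩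
    exact ((ZMod.natCast_eq_natCast_iff _ _ _).mp hp).symm
  obtain ⟨G, hGa⟩ : ∃ G : ℕ, G + a = (q-1)*b + (u-1)*c := ⟨_, Nat.sub_add_cancel hWa⟩
  -- everything above G is representable
  have repr_of_gt : ∀ m : ℕ, G < m → ∃ x y z : ℕ, x*a + y*b + z*c = m := by
    intro m hm
    obtain ⟨y, z, hy, hz, hmod⟩ := key2 m
    have hw_le : y*b + z*c ≤ (q-1)*b + (u-1)*c := by
      have h1 : y*b ≤ (q-1)*b := Nat.mul_le_mul_right _ (by omega)
      have h2 : z*c ≤ (u-1)*c := Nat.mul_le_mul_right _ (by omega)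
      omega
    have hmw : y*b + z*c ≤ m := by
      by_contra hlt
      push_neg at hlt
      have hdvd : a ∣ (y*b + z*c) - m := (Nat.modEq_iff_dvd' hlt.le).mp hmod
      have hpos : 0 < (y*b + z*c) - m := by omega
      have hlta : (y*b + z*c) - m < a := by omega
      have := Nat.le_of_dvd hpos hdvd
      omega
    obtain ⟨x, hx⟩ : a ∣ m - (y*b + z*c) := (Nat.modEq_iff_dvd' hmw).mp hmod.symm
    have hca2 : a * x = x * a := mul_comm a x
    exact ⟨x, y, z, by omega⟩
  -- G is not representable
  have hGnr : ¬ ∃ x y z : ℕ, x*a + y*b + z*c = G := by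
    rintro ⟨x, y, z, hxyz⟩
    have heq : x*a + y*b + z*c + a = (q-1)*b + (u-1)*c := by omega
    -- z ≡ u-1 mod u
    have hLmod : x*a + y*b + z*c + a ≡ z [MOD u] := by
      calc x*a + y*b + z*c + a ≡ x*0 + y*0 + z*1 + 0 [MOD u] :=
        ((((hau.mul_left x).add (hbu.mul_left y)).add (hcu.mul_left z)).add hau)
      _ = z := by ring
    have hRmod : (q-1)*b + (u-1)*c ≡ u-1 [MOD u] := by
      calc (q-1)*b + (u-1)*c ≡ (q-1)*0 + (u-1)*1 [MOD u] :=
        Nat.ModEq.add (hbu.mul_left (q-1)) (hcu.mul_left (u-1))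
      _ = u-1 := by ring
    have hzmod : z ≡ u-1 [MOD u] := (hLmod.symm.trans (heq ▸ hRmod : x*a + y*b + z*c + a ≡ u-1 [MOD u]))
    have hzm : z % u = u - 1 := by
      have := hzmod
      unfold Nat.ModEq at this
      rwa [Nat.mod_eq_of_lt (by omega : u - 1 < u)] at this
    have hzdec : z = u * (z / u) + (u - 1) := by
      conv_lhs => rw [← Nat.div_add_mod z u]
      omega
    rcases Nat.eq_zero_or_pos (z / u) with ht | ht
    · -- z = u - 1
      rw [ht, mul_zero] at hzdec
      have hz : z = u - 1 := by omega
      subst hz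
      have heq2 : x*a + y*b + a = (q-1)*b := by omega
      have hylt : y < q - 1 := by
        by_contra hy
        push_neg at hy
        have : (q-1)*b ≤ y*b := Nat.mul_le_mul_right _ hy
        omega
      have hd : (q-1-y)*b = (x+1)*a := by
        have h6 : (q-1-y)*b = (q-1)*b - y*b := by rw [Nat.sub_mul]
        have h7 : (x+1)*a = x*a + a := by ring
        omega
      rw [hbq, haq] at hd
      have hd2 : (q-1-y)*q' = (x+1)*q := by
        have h3 : (q-1-y)*(u*q') = u*((q-1-y)*q') := by ring
        have h4 : (x+1)*(u*q) = u*((x+1)*q) := by ring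
        rw [h3, h4] at hd
        exact Nat.eq_of_mul_eq_mul_left hu0 hd
      have hqd : q ∣ (q-1-y) := by
        have h8 : q ∣ (q-1-y)*q' := ⟨x+1, by rw [hd2]; ring⟩
        exact hcop.dvd_of_dvd_mul_right h8
      have h5 : 0 < q - 1 - y := by omega
      have := Nat.le_of_dvd h5 hqd
      omega
    · -- z ≥ 2u - 1 : contradiction with size
      have h9 : u ≤ u * (z / u) := Nat.le_mul_of_pos_right u ht
      have hz2u : 2*u - 1 ≤ z := by omega
      have h1 : (2*u-1)*c ≤ z*c := Nat.mul_le_mul_right _ hz2u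
      have h2 : (u-1)*c + c ≤ (2*u-1)*c := by
        have : (u-1) + u = 2*u - 1 := by omega
        calc (u-1)*c + c ≤ (u-1)*c + u*c := by
              have : c ≤ u*c := by
                calc c = 1*c := (one_mul c).symm
                _ ≤ u*c := Nat.mul_le_mul_right _ hu1
              omega
        _ = ((u-1) + u)*c := by ring
        _ = (2*u-1)*c := by rw [this]
      omega
  refine ⟨G, ⟨⟨hGnr, ?_⟩, ?_⟩⟩
  · -- upper bound
    intro m hm
    by_contra hgm
    push_neg at hgm
    exact hm (repr_of_gt m hgm)
  · -- the integer formula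
    have hqdiv : a / u = q := by rw [haq, Nat.mul_div_cancel_left _ hu0]
    rw [hqdiv]
    have h1 : 1 ≤ q := hq_pos
    have h2 : 1 ≤ u := hu1
    have hZ : ((G + a : ℕ) : ℤ) = (((q-1)*b + (u-1)*c : ℕ) : ℤ) := by rw [hGa]
    push_cast [Nat.cast_sub h1, Nat.cast_sub h2] at hZ
    linarith [hZ]
end
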